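/- A commutative ring R is weakly nil-clean if and only if J(R) is nil and R/J(R) is isomorphic to a Boolean ring, or to ℤ/3ℤ, or to the direct product of a Boolean ring and ℤ/3ℤ. -/

import Mathlib

def IsWeaklyNilClean (R : Type*) [CommRing R] : Prop :=
  ∀ a : R, ∃ n e : R, IsNilpotent n ∧ IsIdempotentElem e ∧ (a = n + e ∨ a = n - e)

universe u

section Aux

lemma wnc_P_transfer {S T : Type*} [CommRing S] [CommRing T] (f : S ≃+* T)
    (hP : ∀ x : T, x * x = x ∨ x * x = -x) (s : S) : s * s = s ∨ s * s = -s := by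
  rcases hP (f s) with h | h
  · left; apply f.injective; rw [map_mul, h]
  · right; apply f.injective; rw [map_mul, map_neg, h]

lemma wnc_P_surj {S T : Type*} [CommRing S] [CommRing T] (f : S →+* T)
    (hf : Function.Surjective f) (hP : ∀ x : S, x * x = x ∨ x * x = -x) :
    ∀ y : T, y * y = y ∨ y * y = -y := by
  intro y
  obtain ⟨x, rfl⟩ := hf y
  rcases hP x with h | h
  · left; rw [← map_mul, h]
  · right; rw [← map_mul, h, map_neg]

lemma wnc_zmod3 (T : Type*) [CommRing T] [Nontrivial T] (h3 : (3 : T) = 0)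
    (hP : ∀ x : T, x * x = x ∨ x * x = -x) : Nonempty (T ≃+* ZMod 3) := by
  have hidem : ∀ e : T, e * e = e → e = 0 ∨ e = 1 := by
    intro e he
    have key : (e + 1) * (e + 1) = 1 := by linear_combination he + e * h3
    rcases hP (e + 1) with h | h
    · left; linear_combination key - h
    · right; linear_combination h - key - h3
  have htri : ∀ x : T, x = 0 ∨ x = 1 ∨ x = -1 := by
    intro x
    rcases hP x with h | h
    · rcases hidem x h with h0 | h1
      · exact Or.inl h0
      · exact Or.inr (Or.inl h1)
    · rcases hidem (-x) (by linear_combination h) with h0 | h1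
      · left; linear_combination -h0
      · right; right; linear_combination -h1
  have h2 : (2 : T) ≠ 0 := by
    intro h
    exact one_ne_zero (α := T) (by linear_combination h3 - h)
  haveI : CharP T 3 := by
    constructor
    intro n
    constructor
    · intro h
      have hmod : ((n % 3 : ℕ) : T) = 0 := by
        have hn := Nat.mod_add_div n 3
        have h0 : ((n % 3 + 3 * (n / 3) : ℕ) : T) = 0 := by rw [hn, h]
        push_cast at h0
        linear_combination h0 - ((n / 3 : ℕ) : T) * h3
      have hr : n % 3 = 0 ∨ n % 3 = 1 ∨ n % 3 = 2 := by omega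
      rcases hr with hr | hr | hr
      · omega
      · exfalso; rw [hr] at hmod; simp at hmod
      · exfalso; rw [hr] at hmod; exact h2 (by simpa using hmod)
    · rintro ⟨k, rfl⟩
      push_cast [h3]
      ring
  haveI : Fact (Nat.Prime 3) := ⟨by norm_num⟩
  let f : ZMod 3 →+* T := ZMod.castHom (dvd_refl 3) T
  have hbij : Function.Bijective f := by
    constructor
    · exact f.injective
    · intro x
      rcases htri x with rfl | rfl | rfl
      · exact ⟨0, map_zero f⟩
      · exact ⟨1, map_one f⟩
      · exact ⟨-1, by rw [map_neg, map_one]⟩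
  exact ⟨(RingEquiv.ofBijective f hbij).symm⟩

lemma wnc_structure (S : Type u) [CommRing S] (hP : ∀ s : S, s * s = s ∨ s * s = -s) :
    (∃ (B : Type u) (_ : CommRing B), (∀ b : B, b * b = b) ∧ Nonempty (S ≃+* B)) ∨
      Nonempty (S ≃+* ZMod 3) ∨
      (∃ (B : Type u) (_ : CommRing B), (∀ b : B, b * b = b) ∧
        Nonempty (S ≃+* (B × ZMod 3))) := by
  have h6 : (6 : S) = 0 := by
    rcases hP 2 with h | h
    · linear_combination 3 * h
    · linear_combination h
  by_cases h4 : (4 : S) = 0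
  · -- char 2, Boolean
    have h2 : (2 : S) = 0 := by linear_combination h6 - h4
    refine Or.inl ⟨S, inferInstance, ?_, ⟨RingEquiv.refl S⟩⟩
    intro b
    rcases hP b with h | h
    · exact h
    · rw [h]; linear_combination -b * h2
  by_cases h3 : (3 : S) = 0
  · haveI : Nontrivial S := ⟨1, 0, fun h => h4 (by linear_combination 4 * h)⟩
    exact Or.inr (Or.inl (wnc_zmod3 S h3 hP))
  · -- CRT
    have he4 : (4 : S) * 4 = 4 := by linear_combination 2 * h6
    set I := Ideal.span {(4 : S)} with hI
    set K := Ideal.span {1 - (4 : S)} with hK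
    have coprime : IsCoprime I K := by
      rw [hI, hK, Ideal.isCoprime_span_singleton_iff]
      exact ⟨1, 1, by ring⟩
    have hinf : I ⊓ K = ⊥ := by
      refine le_antisymm ?_ bot_le
      intro x hx
      obtain ⟨hx1, hx2⟩ := Ideal.mem_inf.1 hx
      obtain ⟨c, hc⟩ := Ideal.mem_span_singleton'.1 hx1
      obtain ⟨d, hd⟩ := Ideal.mem_span_singleton'.1 hx2
      rw [Ideal.mem_bot]
      linear_combination 3 * hc - 4 * hd - (2 * c + 2 * d) * h6
    have equiv : S ≃+* (S ⧸ I) × (S ⧸ K) :=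
      (RingEquiv.quotientBot S).symm.trans
        ((Ideal.quotEquivOfEq hinf.symm).trans
          (Ideal.quotientInfEquivQuotientProd I K coprime))
    -- S ⧸ I is Boolean
    have hQ4 : (4 : S ⧸ I) = 0 := by
      have : Ideal.Quotient.mk I (4 : S) = 0 :=
        Ideal.Quotient.eq_zero_iff_mem.2 (Ideal.subset_span rfl)
      simpa [map_ofNat] using this
    have hQ6 : (6 : S ⧸ I) = 0 := by
      have := congrArg (Ideal.Quotient.mk I) h6
      simpa [map_ofNat] using this
    have hPQ : ∀ y : S ⧸ I, y * y = y ∨ y * y = -y :=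
      wnc_P_surj (Ideal.Quotient.mk I) Ideal.Quotient.mk_surjective hP
    have hbool : ∀ b : S ⧸ I, b * b = b := by
      have h2 : (2 : S ⧸ I) = 0 := by linear_combination hQ6 - hQ4
      intro b
      rcases hPQ b with h | h
      · exact h
      · rw [h]; linear_combination -b * h2
    -- S ⧸ K ≃ ZMod 3
    have hK3 : (3 : S ⧸ K) = 0 := by
      have : Ideal.Quotient.mk K (1 - (4 : S)) = 0 :=
        Ideal.Quotient.eq_zero_iff_mem.2 (Ideal.subset_span rfl)
      have h14 : (1 : S ⧸ K) - 4 = 0 := by simpa [map_ofNat] using this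
      linear_combination -h14
    haveI : Nontrivial (S ⧸ K) := by
      refine Ideal.Quotient.nontrivial_iff.mpr ?_
      intro htop
      apply h4
      have : (1 : S) ∈ K := htop ▸ Submodule.mem_top
      obtain ⟨c, hc⟩ := Ideal.mem_span_singleton'.1 this
      linear_combination -4 * hc - 2 * c * h6
    have hPK : ∀ y : S ⧸ K, y * y = y ∨ y * y = -y :=
      wnc_P_surj (Ideal.Quotient.mk K) Ideal.Quotient.mk_surjective hP
    obtain ⟨eqK⟩ := wnc_zmod3 (S ⧸ K) hK3 hPK
    refine Or.inr (Or.inr ⟨S ⧸ I, inferInstance, hbool,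
      ⟨equiv.trans (RingEquiv.prodCongr (RingEquiv.refl (S ⧸ I)) eqK)⟩⟩)

end Aux

theorem weakly_nil_clean_iff (R : Type u) [CommRing R] :
    IsWeaklyNilClean R ↔
      ((∀ x ∈ Ideal.jacobson (⊥ : Ideal R), IsNilpotent x) ∧
        ((∃ (B : Type u) (_ : CommRing B), (∀ b : B, b * b = b) ∧
            Nonempty ((R ⧸ Ideal.jacobson (⊥ : Ideal R)) ≃+* B)) ∨
          Nonempty ((R ⧸ Ideal.jacobson (⊥ : Ideal R)) ≃+* ZMod 3) ∨
          (∃ (B : Type u) (_ : CommRing B), (∀ b : B, b * b = b) ∧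
            Nonempty ((R ⧸ Ideal.jacobson (⊥ : Ideal R)) ≃+* (B × ZMod 3))))) := by
  have mem_jac : ∀ x : R, IsNilpotent x → x ∈ Ideal.jacobson (⊥ : Ideal R) := by
    intro x hx
    apply Ideal.radical_le_jacobson
    rw [← Ideal.zero_eq_bot]
    exact mem_nilradical.2 hx
  constructor
  · intro hW
    have hidem0 : ∀ e : R, IsIdempotentElem e → e ∈ Ideal.jacobson (⊥ : Ideal R) → e = 0 := by
      intro e he hm
      have hu : IsUnit (e * (-1) + 1) := Ideal.mem_jacobson_bot.1 hm (-1)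
      have h0 : e * (e * (-1) + 1) = 0 := by
        have he' := he.eq
        linear_combination -he'
      exact (hu.mul_left_eq_zero).1 h0
    have hJnil : ∀ x ∈ Ideal.jacobson (⊥ : Ideal R), IsNilpotent x := by
      intro x hx
      obtain ⟨n, e, hn, he, hae⟩ := hW x
      have hnJ : n ∈ Ideal.jacobson (⊥ : Ideal R) := mem_jac n hn
      rcases hae with rfl | rfl
      · have : e = 0 := hidem0 e he (by simpa using Ideal.sub_mem _ hx hnJ)
        simpa [this] using hn
      · have : e = 0 := hidem0 e he (by simpa using Ideal.sub_mem _ hnJ hx)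
        simpa [this] using hn
    refine ⟨hJnil, ?_⟩
    have hPS : ∀ s : R ⧸ Ideal.jacobson (⊥ : Ideal R), s * s = s ∨ s * s = -s := by
      intro s
      obtain ⟨a, rfl⟩ := Ideal.Quotient.mk_surjective s
      obtain ⟨n, e, hn, he, hae⟩ := hW a
      have hn0 : Ideal.Quotient.mk (Ideal.jacobson (⊥ : Ideal R)) n = 0 :=
        Ideal.Quotient.eq_zero_iff_mem.2 (mem_jac n hn)
      rcases hae with rfl | rfl
      · left
        rw [map_add, hn0, zero_add, ← map_mul, he.eq]
      · right
        rw [map_sub, hn0, zero_sub, neg_mul_neg, ← map_mul, he.eq, neg_neg]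
    exact wnc_structure (R ⧸ Ideal.jacobson (⊥ : Ideal R)) hPS
  · rintro ⟨hJnil, hcase⟩
    have hPS : ∀ s : R ⧸ Ideal.jacobson (⊥ : Ideal R), s * s = s ∨ s * s = -s := by
      rcases hcase with h | h | h
      · obtain ⟨B, hBi, hB, ⟨f⟩⟩ := h
        letI := hBi
        exact fun s => wnc_P_transfer f (fun x => Or.inl (hB x)) s
      · obtain ⟨f⟩ := h
        exact fun s => wnc_P_transfer f (by decide) s
      · obtain ⟨B, hBi, hB, ⟨f⟩⟩ := h
        letI := hBi
        have h2B : ∀ b : B, b + b = 0 := by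
          intro b
          have h1 := hB (b + b)
          have h2 := hB b
          linear_combination h1 - 4 * h2
        refine fun s => wnc_P_transfer f ?_ s
        rintro ⟨b, z⟩
        rcases (by decide : ∀ z : ZMod 3, z * z = z ∨ z * z = -z) z with h | h
        · left
          exact Prod.ext (hB b) h
        · right
          refine Prod.ext ?_ h
          show b * b = -b
          rw [hB b]
          linear_combination h2B b
    intro a
    have hker : ∀ x ∈ RingHom.ker (Ideal.Quotient.mk (Ideal.jacobson (⊥ : Ideal R))),
        IsNilpotent x := by
      intro x hx
      exact hJnil x (by rwa [Ideal.mk_ker] at hx)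
    rcases hPS (Ideal.Quotient.mk _ a) with h | h
    · obtain ⟨e, he, hfe⟩ := exists_isIdempotentElem_eq_of_ker_isNilpotent
        (Ideal.Quotient.mk (Ideal.jacobson (⊥ : Ideal R))) hker _ ⟨a, rfl⟩ h
      refine ⟨a - e, e, ?_, he, Or.inl (by ring)⟩
      apply hJnil
      rw [← Ideal.Quotient.eq_zero_iff_mem, map_sub, hfe, sub_self]
    · have h' : IsIdempotentElem (-(Ideal.Quotient.mk (Ideal.jacobson (⊥ : Ideal R)) a)) := by
        show _ * _ = _
        rw [neg_mul_neg, h]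
      obtain ⟨e, he, hfe⟩ := exists_isIdempotentElem_eq_of_ker_isNilpotent
        (Ideal.Quotient.mk (Ideal.jacobson (⊥ : Ideal R))) hker _ ⟨-a, by rw [map_neg]⟩ h'
      refine ⟨a + e, e, ?_, he, Or.inr (by ring)⟩
      apply hJnil
      rw [← Ideal.Quotient.eq_zero_iff_mem, map_add, hfe, add_neg_cancel]
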